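/- Let y : ℝ → ℝ be (p̃+1)-times continuously differentiable. For the stage-error function Ẽ(αh) := (1-u(α))y(-h) + u(α)y(0) + h Σⱼ ãⱼ(α)y'(-h+cⱼh) + h Σⱼ aⱼ(α)y'(cⱼh) - y(αh), if Γₖ(α) = 0 for all α ∈ [0,c] and k = 1,...,p̃ (where Γₖ(α) = (1/(k-1)!)[(1-u(α))(-1)ᵏ/k + Σⱼ ãⱼ(α)(-(1-cⱼ))^{k-1} + Σⱼ aⱼ(α)cⱼ^{k-1} - αᵏ/k]), then there exist D > 0 and H > 0 such that |Ẽ(αh)| ≤ D·h^{p̃+1} for all α ∈ [0,c] and h ∈ [0,H]. -/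

import Mathlib

open Finset


lemma taylor_bd : ∀ (n : ℕ) (f : ℝ → ℝ), ContDiff ℝ n f →
    ∃ C, 0 ≤ C ∧ ∀ x : ℝ, |x| ≤ 1 →
      |f x - ∑ k ∈ Finset.range n, iteratedDeriv k f 0 * x ^ k / (Nat.factorial k : ℝ)|
        ≤ C * |x| ^ n := by
  intro n
  induction n with
  | zero =>
    intro f hf
    obtain ⟨C, hC⟩ := (isCompact_Icc (a := (-1:ℝ)) (b := 1)).exists_bound_of_continuousOn
      (hf.continuous.continuousOn)
    refine ⟨max C 0, le_max_right _ _, fun x hx => ?_⟩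
    simp only [Finset.range_zero, Finset.sum_empty, sub_zero, pow_zero, mul_one]
    have := hC x (Set.mem_Icc.mpr (abs_le.mp hx))
    rw [Real.norm_eq_abs] at this
    exact this.trans (le_max_left _ _)
  | succ n ih =>
    intro f hf
    have hf' : Differentiable ℝ f ∧ ContDiff ℝ n (deriv f) := by
      have : ContDiff ℝ ((n : WithTop ℕ∞) + 1) f := by exact_mod_cast hf
      obtain ⟨h1, _, h3⟩ := contDiff_succ_iff_deriv.mp this
      exact ⟨h1, h3⟩
    obtain ⟨C, hC0, hC⟩ := ih (deriv f) hf'.2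
    refine ⟨C, hC0, fun x hx => ?_⟩
    set g : ℝ → ℝ := fun x => f x -
      ∑ k ∈ Finset.range (n+1), iteratedDeriv k f 0 * x ^ k / (Nat.factorial k : ℝ) with hg
    have hgd : ∀ t : ℝ, HasDerivAt g
        (deriv f t - ∑ k ∈ Finset.range n,
          iteratedDeriv k (deriv f) 0 * t ^ k / (Nat.factorial k : ℝ)) t := by
      intro t
      have h1 : HasDerivAt (fun x : ℝ => ∑ k ∈ Finset.range (n+1),
          iteratedDeriv k f 0 * x ^ k / (Nat.factorial k : ℝ))
          (∑ k ∈ Finset.range (n+1),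
            iteratedDeriv k f 0 * ((k : ℝ) * t ^ (k-1)) / (Nat.factorial k : ℝ)) t := by
        apply HasDerivAt.fun_sum
        intro k _
        exact ((hasDerivAt_pow k t).const_mul _).div_const _
      have h2 : (∑ k ∈ Finset.range (n+1),
            iteratedDeriv k f 0 * ((k : ℝ) * t ^ (k-1)) / (Nat.factorial k : ℝ))
          = ∑ k ∈ Finset.range n,
            iteratedDeriv k (deriv f) 0 * t ^ k / (Nat.factorial k : ℝ) := by
        rw [Finset.sum_range_succ']
        simp only [Nat.cast_zero, zero_mul, mul_zero, zero_div, add_zero]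
        apply Finset.sum_congr rfl
        intro k _
        rw [← iteratedDeriv_succ']
        rw [Nat.factorial_succ, Nat.add_sub_cancel]
        push_cast
        field_simp
      rw [← h2]
      exact ((hf'.1 t).hasDerivAt).sub h1
    have hg0 : g 0 = 0 := by
      simp only [hg]
      rw [Finset.sum_range_succ' (fun k => iteratedDeriv k f 0 * (0:ℝ) ^ k / (Nat.factorial k : ℝ))]
      simp [iteratedDeriv_zero]
    have hbd : ∀ t ∈ Set.uIcc (0:ℝ) x, ‖deriv g t‖ ≤ C * |x| ^ n := by
      intro t ht
      have htx : |t| ≤ |x| := by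
        rw [Set.uIcc_eq_union] at ht
        rcases ht with ht | ht <;> rw [abs_le] <;> rcases Set.mem_Icc.mp ht with ⟨h1, h2⟩ <;>
          constructor <;> nlinarith [abs_nonneg x, le_abs_self x, neg_abs_le x]
      have ht1 : |t| ≤ 1 := htx.trans hx
      rw [(hgd t).deriv]
      calc ‖deriv f t - ∑ k ∈ Finset.range n,
            iteratedDeriv k (deriv f) 0 * t ^ k / (Nat.factorial k : ℝ)‖ ≤ C * |t| ^ n :=
              hC t ht1
        _ ≤ C * |x| ^ n := by
              apply mul_le_mul_of_nonneg_left (pow_le_pow_left₀ (abs_nonneg t) htx n) hC0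
    have := Convex.norm_image_sub_le_of_norm_deriv_le
      (fun t _ => (hgd t).differentiableAt) hbd (convex_uIcc 0 x)
      (Set.left_mem_uIcc) (Set.right_mem_uIcc)
    rw [hg0, sub_zero, sub_zero] at this
    calc |g x| ≤ C * |x| ^ n * ‖x‖ := this
      _ = C * |x| ^ (n+1) := by rw [Real.norm_eq_abs, pow_succ]; ring

lemma swap_aux {s : ℕ} (p : ℕ) (b e : Fin s → ℝ) (v : ℕ → ℝ) (h : ℝ) :
    h * ∑ j, b j * (∑ k ∈ Finset.range p, v (k+1) * (e j * h) ^ k / (Nat.factorial k : ℝ))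
      = ∑ k ∈ Finset.range p,
          (∑ j, b j * e j ^ k) * (v (k+1) * h ^ (k+1) / (Nat.factorial k : ℝ)) := by
  simp only [Finset.mul_sum]
  rw [Finset.sum_comm]
  apply Finset.sum_congr rfl
  intro k _
  rw [Finset.sum_mul]
  apply Finset.sum_congr rfl
  intro j _
  ring



/-- The quantity Γₖ(α) for a stage of a two-step GLM with polynomial
coefficient functions u, ãⱼ, aⱼ and abscissae cⱼ. -/
noncomputable def stageGamma (s : ℕ) (cj : Fin s → ℝ) (u : Polynomial ℝ)
    (ta a : Fin s → Polynomial ℝ) (k : ℕ) (α : ℝ) : ℝ :=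
  (1 / (Nat.factorial (k - 1) : ℝ)) *
    ((1 - u.eval α) * (-1) ^ k / k
      + ∑ j, (ta j).eval α * (-(1 - cj j)) ^ (k - 1)
      + ∑ j, (a j).eval α * (cj j) ^ (k - 1)
      - α ^ k / k)

/-- The stage-error function Ẽ(αh) of a two-step GLM stage applied to a
function y. -/
noncomputable def stageError (s : ℕ) (cj : Fin s → ℝ) (u : Polynomial ℝ)
    (ta a : Fin s → Polynomial ℝ) (y : ℝ → ℝ) (h α : ℝ) : ℝ :=
  (1 - u.eval α) * y (-h) + u.eval α * y 0
    + h * ∑ j, (ta j).eval α * deriv y (-h + cj j * h)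
    + h * ∑ j, (a j).eval α * deriv y (cj j * h)
    - y (α * h)

set_option maxHeartbeats 2000000 in
/-- If y is (p̃+1)-times continuously differentiable and Γₖ vanishes on [0,c]
for k = 1,...,p̃, then the stage error is bounded by D·h^{p̃+1} uniformly for
α ∈ [0,c] and h ∈ [0,H]. -/
theorem stmt9 (s : ℕ) (c : ℝ) (hc : 0 ≤ c) (cj : Fin s → ℝ)
    (hcj : ∀ j, cj j ∈ Set.Icc (0:ℝ) 1)
    (u : Polynomial ℝ) (ta a : Fin s → Polynomial ℝ) (p : ℕ)
    (y : ℝ → ℝ) (hy : ContDiff ℝ (p + 1) y)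
    (hΓ : ∀ α ∈ Set.Icc 0 c, ∀ k, 1 ≤ k → k ≤ p →
      stageGamma s cj u ta a k α = 0) :
    ∃ D > (0:ℝ), ∃ H > (0:ℝ), ∀ α ∈ Set.Icc 0 c, ∀ h ∈ Set.Icc (0:ℝ) H,
      |stageError s cj u ta a y h α| ≤ D * h ^ (p + 1) := by
  -- Taylor bounds for y and deriv y
  obtain ⟨C₁, hC₁0, hC₁⟩ := taylor_bd (p+1) y (by rw [Nat.cast_add_one]; exact hy)
  have hyd : ContDiff ℝ p (deriv y) := (contDiff_succ_iff_deriv.mp hy).2.2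
  obtain ⟨C₂, hC₂0, hC₂⟩ := taylor_bd p (deriv y) hyd
  -- bound on the coefficient polynomials on [0, c]
  obtain ⟨K, hK⟩ := (isCompact_Icc (a := (0:ℝ)) (b := c)).exists_bound_of_continuousOn
    (f := fun α => |u.eval α| + (∑ j, |(ta j).eval α|) + (∑ j, |(a j).eval α|))
    (by fun_prop)
  set K' : ℝ := max K 1 with hK'def
  have hK'1 : (1:ℝ) ≤ K' := le_max_right _ _
  have hK'0 : (0:ℝ) ≤ K' := by linarith
  have hKb : ∀ α ∈ Set.Icc (0:ℝ) c, |u.eval α| ≤ K' ∧ (∑ j, |(ta j).eval α|) ≤ K'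
      ∧ (∑ j, |(a j).eval α|) ≤ K' := by
    intro α hα
    have h0 : (0:ℝ) ≤ |u.eval α| := abs_nonneg _
    have h1 : (0:ℝ) ≤ ∑ j, |(ta j).eval α| := Finset.sum_nonneg fun j _ => abs_nonneg _
    have h2 : (0:ℝ) ≤ ∑ j, |(a j).eval α| := Finset.sum_nonneg fun j _ => abs_nonneg _
    have := hK α hα
    rw [Real.norm_eq_abs, abs_of_nonneg (by linarith)] at this
    have hKK : |u.eval α| + (∑ j, |(ta j).eval α|) + (∑ j, |(a j).eval α|) ≤ K' :=
      this.trans (le_max_left _ _)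
    exact ⟨by linarith, by linarith, by linarith⟩
  have hc1 : (0:ℝ) < c + 1 := by linarith
  refine ⟨(1+K')*C₁ + 2*(K'*C₂) + C₁*(1+c)^(p+1) + 1, ?_, min 1 (1/(c+1)), ?_, ?_⟩
  · have : (0:ℝ) ≤ (1+c)^(p+1) := pow_nonneg (by linarith) _
    nlinarith
  · exact lt_min one_pos (by positivity)
  intro α hα h hh
  obtain ⟨hα0, hαc⟩ := hα
  obtain ⟨hh0, hhH⟩ := hh
  have hH1 : h ≤ 1 := hhH.trans (min_le_left _ _)
  have hH2 : h ≤ 1/(c+1) := hhH.trans (min_le_right _ _)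
  have hαh1 : α * h ≤ 1 := by
    have h1 : α * h ≤ c * (1/(c+1)) := by
      apply mul_le_mul hαc hH2 hh0 hc
    have h2 : c * (1/(c+1)) ≤ 1 := by
      rw [mul_one_div, div_le_one hc1]; linarith
    linarith
  have hαh0 : 0 ≤ α * h := mul_nonneg hα0 hh0
  -- Taylor polynomial pieces
  set v : ℕ → ℝ := fun k => iteratedDeriv k y 0 with hv
  set T : ℝ → ℝ := fun x => ∑ k ∈ Finset.range (p+1), v k * x ^ k / (Nat.factorial k : ℝ)
    with hTdef
  set S : ℝ → ℝ := fun x => ∑ k ∈ Finset.range p, v (k+1) * x ^ k / (Nat.factorial k : ℝ)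
    with hSdef
  have hT1 : ∀ x : ℝ, |x| ≤ 1 → |y x - T x| ≤ C₁ * |x| ^ (p+1) := fun x hx => hC₁ x hx
  have hS1 : ∀ x : ℝ, |x| ≤ 1 → |deriv y x - S x| ≤ C₂ * |x| ^ p := by
    intro x hx
    have e : ∀ k : ℕ, iteratedDeriv k (deriv y) 0 = v (k+1) := by
      intro k; rw [hv]; rw [← iteratedDeriv_succ']
    have := hC₂ x hx
    simp only [e] at this
    exact this
  have hy0 : y 0 = v 0 := by rw [hv]; simp
  have hTx : ∀ x : ℝ, T x
      = (∑ k ∈ Finset.range p, v (k+1) * x ^ (k+1) / (Nat.factorial (k+1) : ℝ)) + v 0 := by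
    intro x
    rw [hTdef]
    simp only
    rw [Finset.sum_range_succ']
    simp
  have harg : ∀ j : Fin s, -h + cj j * h = (cj j - 1) * h := fun j => by ring
  -- the Γ conditions
  have step : ∀ k ∈ Finset.range p, stageGamma s cj u ta a (k+1) α = 0 := by
    intro k hk
    exact hΓ α ⟨hα0, hαc⟩ (k+1) (Nat.le_add_left 1 k) (Finset.mem_range.mp hk)
  -- termwise identity
  have term : ∀ k ∈ Finset.range p,
      v (k+1) * h ^ (k+1) * stageGamma s cj u ta a (k+1) α
        = (1 - u.eval α) * (v (k+1) * (-h) ^ (k+1) / (Nat.factorial (k+1) : ℝ))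
          + (∑ j, (ta j).eval α * (cj j - 1) ^ k)
              * (v (k+1) * h ^ (k+1) / (Nat.factorial k : ℝ))
          + (∑ j, (a j).eval α * (cj j) ^ k)
              * (v (k+1) * h ^ (k+1) / (Nat.factorial k : ℝ))
          - v (k+1) * (α * h) ^ (k+1) / (Nat.factorial (k+1) : ℝ) := by
    intro k _
    simp only [stageGamma, Nat.add_sub_cancel, neg_sub]
    have hfac : ((Nat.factorial (k+1) : ℝ)) = ((k:ℝ)+1) * (Nat.factorial k : ℝ) := by
      rw [Nat.factorial_succ]; push_cast; ring
    have hk0 : (Nat.factorial k : ℝ) ≠ 0 := Nat.cast_ne_zero.mpr (Nat.factorial_ne_zero k)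
    have hk1 : ((k:ℝ)+1) ≠ 0 := by positivity
    rw [hfac]
    push_cast
    field_simp
    ring
  -- the main cancellation
  have main0 : (1 - u.eval α) * T (-h) + u.eval α * y 0
      + h * ∑ j, (ta j).eval α * S ((cj j - 1) * h)
      + h * ∑ j, (a j).eval α * S (cj j * h)
      - T (α * h) = 0 := by
    have sw1 : h * ∑ j, (ta j).eval α * S ((cj j - 1) * h)
        = ∑ k ∈ Finset.range p, (∑ j, (ta j).eval α * (cj j - 1) ^ k)
            * (v (k+1) * h ^ (k+1) / (Nat.factorial k : ℝ)) :=
      swap_aux p (fun j => (ta j).eval α) (fun j => cj j - 1) v h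
    have sw2 : h * ∑ j, (a j).eval α * S (cj j * h)
        = ∑ k ∈ Finset.range p, (∑ j, (a j).eval α * (cj j) ^ k)
            * (v (k+1) * h ^ (k+1) / (Nat.factorial k : ℝ)) :=
      swap_aux p (fun j => (a j).eval α) (fun j => cj j) v h
    rw [sw1, sw2, hTx (-h), hTx (α * h), hy0]
    have z : ∀ k ∈ Finset.range p,
        (1 - u.eval α) * (v (k+1) * (-h) ^ (k+1) / (Nat.factorial (k+1) : ℝ))
          + (∑ j, (ta j).eval α * (cj j - 1) ^ k)
              * (v (k+1) * h ^ (k+1) / (Nat.factorial k : ℝ))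
          + (∑ j, (a j).eval α * (cj j) ^ k)
              * (v (k+1) * h ^ (k+1) / (Nat.factorial k : ℝ))
          - v (k+1) * (α * h) ^ (k+1) / (Nat.factorial (k+1) : ℝ) = 0 := by
      intro k hk
      rw [← term k hk, step k hk]
      ring
    have zz := Finset.sum_eq_zero z
    rw [Finset.sum_sub_distrib, Finset.sum_add_distrib, Finset.sum_add_distrib,
      ← Finset.mul_sum] at zz
    linarith [zz]
  -- representation of the stage error via remainders
  have hE : stageError s cj u ta a y h α
      = (1 - u.eval α) * (y (-h) - T (-h))
        + h * ∑ j, (ta j).eval α * (deriv y (-h + cj j * h) - S ((cj j - 1) * h))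
        + h * ∑ j, (a j).eval α * (deriv y (cj j * h) - S (cj j * h))
        - (y (α * h) - T (α * h)) := by
    simp only [stageError, mul_sub, Finset.sum_sub_distrib]
    linarith [main0]
  -- bounds
  have b1 : |y (-h) - T (-h)| ≤ C₁ * h ^ (p+1) := by
    have habs : |(-h : ℝ)| = h := by rw [abs_neg, abs_of_nonneg hh0]
    have := hT1 (-h) (by rw [habs]; exact hH1)
    rwa [habs] at this
  have b4 : |y (α * h) - T (α * h)| ≤ C₁ * ((1+c) * h) ^ (p+1) := by
    have habs : |α * h| = α * h := abs_of_nonneg hαh0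
    have := hT1 (α * h) (by rw [habs]; exact hαh1)
    rw [habs] at this
    refine this.trans ?_
    apply mul_le_mul_of_nonneg_left _ hC₁0
    apply pow_le_pow_left₀ hαh0
    nlinarith
  have b2 : ∀ j : Fin s, |deriv y (-h + cj j * h) - S ((cj j - 1) * h)| ≤ C₂ * h ^ p := by
    intro j
    obtain ⟨hj0, hj1⟩ := hcj j
    have h1 : |(cj j - 1) * h| ≤ h := by
      rw [abs_mul, abs_of_nonneg hh0]
      have : |cj j - 1| ≤ 1 := by rw [abs_le]; constructor <;> linarith
      nlinarith
    have := hS1 ((cj j - 1) * h) (h1.trans hH1)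
    rw [harg j]
    refine this.trans ?_
    exact mul_le_mul_of_nonneg_left (pow_le_pow_left₀ (abs_nonneg _) h1 p) hC₂0
  have b3 : ∀ j : Fin s, |deriv y (cj j * h) - S (cj j * h)| ≤ C₂ * h ^ p := by
    intro j
    obtain ⟨hj0, hj1⟩ := hcj j
    have h1 : |cj j * h| ≤ h := by
      rw [abs_mul, abs_of_nonneg hh0, abs_of_nonneg hj0]
      nlinarith
    have := hS1 (cj j * h) (h1.trans hH1)
    refine this.trans ?_
    exact mul_le_mul_of_nonneg_left (pow_le_pow_left₀ (abs_nonneg _) h1 p) hC₂0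
  obtain ⟨hKu, hKta, hKa⟩ := hKb α ⟨hα0, hαc⟩
  have hhp : (0:ℝ) ≤ h ^ p := pow_nonneg hh0 p
  have sb2 : |∑ j, (ta j).eval α * (deriv y (-h + cj j * h) - S ((cj j - 1) * h))|
      ≤ K' * (C₂ * h ^ p) := by
    calc |∑ j, (ta j).eval α * (deriv y (-h + cj j * h) - S ((cj j - 1) * h))|
        ≤ ∑ j, |(ta j).eval α * (deriv y (-h + cj j * h) - S ((cj j - 1) * h))| :=
          Finset.abs_sum_le_sum_abs _ _
      _ ≤ ∑ j, |(ta j).eval α| * (C₂ * h ^ p) := by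
          apply Finset.sum_le_sum
          intro j _
          rw [abs_mul]
          exact mul_le_mul_of_nonneg_left (b2 j) (abs_nonneg _)
      _ = (∑ j, |(ta j).eval α|) * (C₂ * h ^ p) := by rw [Finset.sum_mul]
      _ ≤ K' * (C₂ * h ^ p) := by
          apply mul_le_mul_of_nonneg_right hKta (by positivity)
  have sb3 : |∑ j, (a j).eval α * (deriv y (cj j * h) - S (cj j * h))|
      ≤ K' * (C₂ * h ^ p) := by
    calc |∑ j, (a j).eval α * (deriv y (cj j * h) - S (cj j * h))|
        ≤ ∑ j, |(a j).eval α * (deriv y (cj j * h) - S (cj j * h))| :=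
          Finset.abs_sum_le_sum_abs _ _
      _ ≤ ∑ j, |(a j).eval α| * (C₂ * h ^ p) := by
          apply Finset.sum_le_sum
          intro j _
          rw [abs_mul]
          exact mul_le_mul_of_nonneg_left (b3 j) (abs_nonneg _)
      _ = (∑ j, |(a j).eval α|) * (C₂ * h ^ p) := by rw [Finset.sum_mul]
      _ ≤ K' * (C₂ * h ^ p) := by
          apply mul_le_mul_of_nonneg_right hKa (by positivity)
  have h1u : |1 - u.eval α| ≤ 1 + K' := by
    calc |1 - u.eval α| ≤ |(1:ℝ)| + |u.eval α| := abs_sub _ _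
      _ ≤ 1 + K' := by rw [abs_one]; linarith
  rw [hE]
  have final : |(1 - u.eval α) * (y (-h) - T (-h))
        + h * ∑ j, (ta j).eval α * (deriv y (-h + cj j * h) - S ((cj j - 1) * h))
        + h * ∑ j, (a j).eval α * (deriv y (cj j * h) - S (cj j * h))
        - (y (α * h) - T (α * h))|
      ≤ (1+K') * (C₁ * h ^ (p+1)) + h * (K' * (C₂ * h ^ p)) + h * (K' * (C₂ * h ^ p))
          + C₁ * ((1+c) * h) ^ (p+1) := by
    have habs0 : |h| = h := abs_of_nonneg hh0
    calc |(1 - u.eval α) * (y (-h) - T (-h))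
          + h * ∑ j, (ta j).eval α * (deriv y (-h + cj j * h) - S ((cj j - 1) * h))
          + h * ∑ j, (a j).eval α * (deriv y (cj j * h) - S (cj j * h))
          - (y (α * h) - T (α * h))|
        ≤ |(1 - u.eval α) * (y (-h) - T (-h))
            + h * ∑ j, (ta j).eval α * (deriv y (-h + cj j * h) - S ((cj j - 1) * h))
            + h * ∑ j, (a j).eval α * (deriv y (cj j * h) - S (cj j * h))|
          + |y (α * h) - T (α * h)| := abs_sub _ _
      _ ≤ |(1 - u.eval α) * (y (-h) - T (-h))|
            + |h * ∑ j, (ta j).eval α * (deriv y (-h + cj j * h) - S ((cj j - 1) * h))|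
            + |h * ∑ j, (a j).eval α * (deriv y (cj j * h) - S (cj j * h))|
          + |y (α * h) - T (α * h)| := by
            have := abs_add_le ((1 - u.eval α) * (y (-h) - T (-h))
              + h * ∑ j, (ta j).eval α * (deriv y (-h + cj j * h) - S ((cj j - 1) * h)))
              (h * ∑ j, (a j).eval α * (deriv y (cj j * h) - S (cj j * h)))
            have h2 := abs_add_le ((1 - u.eval α) * (y (-h) - T (-h)))
              (h * ∑ j, (ta j).eval α * (deriv y (-h + cj j * h) - S ((cj j - 1) * h)))
            linarith
      _ ≤ (1+K') * (C₁ * h ^ (p+1)) + h * (K' * (C₂ * h ^ p)) + h * (K' * (C₂ * h ^ p))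
          + C₁ * ((1+c) * h) ^ (p+1) := by
            have e1 : |(1 - u.eval α) * (y (-h) - T (-h))| ≤ (1+K') * (C₁ * h ^ (p+1)) := by
              rw [abs_mul]
              apply mul_le_mul h1u b1 (abs_nonneg _) (by linarith)
            have e2 : |h * ∑ j, (ta j).eval α * (deriv y (-h + cj j * h) - S ((cj j - 1) * h))|
                ≤ h * (K' * (C₂ * h ^ p)) := by
              rw [abs_mul, habs0]
              exact mul_le_mul_of_nonneg_left sb2 hh0
            have e3 : |h * ∑ j, (a j).eval α * (deriv y (cj j * h) - S (cj j * h))|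
                ≤ h * (K' * (C₂ * h ^ p)) := by
              rw [abs_mul, habs0]
              exact mul_le_mul_of_nonneg_left sb3 hh0
            linarith
  refine final.trans ?_
  have hrw : (1+K') * (C₁ * h ^ (p+1)) + h * (K' * (C₂ * h ^ p)) + h * (K' * (C₂ * h ^ p))
      + C₁ * ((1+c) * h) ^ (p+1)
      = ((1+K') * C₁ + 2*(K'*C₂) + C₁*(1+c)^(p+1)) * h ^ (p+1) := by
    rw [mul_pow]
    ring
  rw [hrw]
  have : (0:ℝ) ≤ h ^ (p+1) := pow_nonneg hh0 _
  nlinarith
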